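/- arXiv:0902.2474 — 3 statements merged into one kernel-verified Lean document; each statement's English description precedes it below -/
import Mathlib

section
/- Let n, q be positive integers with q ≥ 2n, and define v̂ : ℝ² → ℝ² by v̂(x,y) = (x + n·cos(2πqy), y). Then v̂({0} × [-n, n]) is (1/q)-dense in the square [-n, n] × [-n, n]: for every point p in the square there exists y ∈ [-n, n] with dist(v̂(0,y), p) ≤ 1/q. -/
set_option maxHeartbeats 1000000
open Real
noncomputable section
abbrev E := EuclideanSpace ℝ (Fin 2)
/-- The point `(a, b)` of the plane. -/
def pt (a b : ℝ) : E := WithLp.toLp 2 ![a, b]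
/-- The integer vector `v` viewed as a point of the plane. -/
def ivec (v : Fin 2 → ℤ) : E := WithLp.toLp 2 (fun i => (v i : ℝ))

lemma cos_int_pi (k : ℤ) : Real.cos (k * π) = (-1) ^ k := by
  simpa using Real.cos_int_mul_pi_sub 0 k

/-- For `q ≥ 2n`, the image of the vertical segment `{0} × [-n,n]` under the shear
`v̂(x,y) = (x + n·cos(2πqy), y)` is `(1/q)`-dense in the square `[-n,n] × [-n,n]`. -/
theorem stmt_6 (n q : ℕ) (hn : 0 < n) (hq : 2 * n ≤ q) (v : E → E)
    (hv : ∀ z : E, v z 0 = z 0 + (n : ℝ) * Real.cos (2 * π * (q : ℝ) * z 1) ∧ v z 1 = z 1) :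
    ∀ p : E, |p 0| ≤ (n : ℝ) → |p 1| ≤ (n : ℝ) →
      ∃ y : ℝ, -(n : ℝ) ≤ y ∧ y ≤ (n : ℝ) ∧ dist (v (pt 0 y)) p ≤ 1 / (q : ℝ) := by
  intro p ha hb
  set a := p 0 with ha'
  set b := p 1 with hb'
  have hn1 : (1:ℝ) ≤ n := by exact_mod_cast hn
  have hq2 : (2:ℕ) ≤ q := le_trans (by omega) hq
  have hq0 : (0:ℝ) < q := by positivity
  have h2q : (0:ℝ) < 2 * q := by positivity
  set k : ℤ := min ⌊2 * (q:ℝ) * b⌋ (2 * q * n - 1) with hk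
  have hbn := abs_le.mp hb
  have hk1 : (k:ℝ) ≤ 2 * q * b :=
    le_trans (by rw [hk]; exact_mod_cast min_le_left _ _) (Int.floor_le _)
  have hk2 : 2 * (q:ℝ) * b ≤ k + 1 := by
    rcases le_or_gt (⌊2 * (q:ℝ) * b⌋) (2 * q * n - 1) with h | h
    · rw [hk, min_eq_left h]
      exact le_of_lt (Int.lt_floor_add_one _)
    · rw [hk, min_eq_right h.le]
      push_cast
      nlinarith [hbn.2]
  have hk3 : -(2 * (q:ℤ) * n) ≤ k := by
    have h1 : ((-(2 * (q:ℤ) * n) : ℤ) : ℝ) ≤ 2 * (q:ℝ) * b := by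
      push_cast; nlinarith [hbn.1]
    have h2 := Int.le_floor.mpr h1
    have h3 : -(2 * (q:ℤ) * n) ≤ 2 * q * n - 1 := by
      have e1 : (1:ℤ) ≤ q := by exact_mod_cast le_trans (by norm_num) hq2
      have e2 : (1:ℤ) ≤ n := by exact_mod_cast hn
      nlinarith
    exact le_min h2 h3
  have hk4 : k + 1 ≤ 2 * (q:ℤ) * n := by
    have := min_le_right ⌊2 * (q:ℝ) * b⌋ (2 * q * n - 1)
    omega
  set y₁ : ℝ := k / (2 * q) with hy₁
  set y₂ : ℝ := (k + 1) / (2 * q) with hy₂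
  have hy12 : y₁ ≤ y₂ := by
    rw [div_le_div_iff₀ h2q h2q]; nlinarith
  -- the interval [y₁, y₂] is inside [-n, n]
  have hy1n : -(n:ℝ) ≤ y₁ := by
    rw [hy₁, le_div_iff₀ h2q]
    have : (-(2 * (q:ℤ) * n) : ℝ) ≤ (k:ℝ) := by exact_mod_cast hk3
    push_cast at this ⊢
    nlinarith
  have hy2n : y₂ ≤ (n:ℝ) := by
    rw [hy₂, div_le_iff₀ h2q]
    have : ((k:ℝ) + 1) ≤ 2 * (q:ℝ) * n := by exact_mod_cast hk4
    nlinarith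
  -- b lies in [y₁, y₂]
  have hby1 : y₁ ≤ b := by rw [hy₁, div_le_iff₀ h2q]; nlinarith
  have hby2 : b ≤ y₂ := by rw [hy₂, le_div_iff₀ h2q]; nlinarith
  -- intermediate value theorem for f y = n * cos (2πq y)
  set f : ℝ → ℝ := fun y => (n:ℝ) * Real.cos (2 * π * q * y) with hf
  have hcont : ContinuousOn f (Set.uIcc y₁ y₂) := by
    apply Continuous.continuousOn
    fun_prop
  have hfy1 : f y₁ = (n:ℝ) * (-1) ^ k := by
    rw [hf]
    simp only
    rw [show 2 * π * q * y₁ = (k:ℝ) * π by rw [hy₁]; field_simp, cos_int_pi]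
  have hfy2 : f y₂ = -((n:ℝ) * (-1) ^ k) := by
    rw [hf]
    simp only
    rw [show 2 * π * q * y₂ = ((k+1:ℤ):ℝ) * π by rw [hy₂]; push_cast; field_simp,
      cos_int_pi]
    rw [zpow_add_one₀ (by norm_num : (-1:ℝ) ≠ 0)]
    ring
  have hmem : a ∈ Set.uIcc (f y₁) (f y₂) := by
    rw [hfy1, hfy2]
    rcases Int.even_or_odd k with hev | hod
    · rw [hev.neg_one_zpow]
      rw [Set.uIcc_of_ge (by nlinarith : -((n:ℝ) * 1) ≤ (n:ℝ) * 1)]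
      constructor <;> [nlinarith [abs_le.mp ha]; nlinarith [abs_le.mp ha]]
    · rw [hod.neg_one_zpow]
      rw [Set.uIcc_of_le (by nlinarith : (n:ℝ) * (-1) ≤ -((n:ℝ) * (-1)))]
      constructor <;> [nlinarith [abs_le.mp ha]; nlinarith [abs_le.mp ha]]
  obtain ⟨y, hy, hfy⟩ := intermediate_value_uIcc hcont hmem
  rw [Set.uIcc_of_le hy12] at hy
  refine ⟨y, le_trans hy1n hy.1, le_trans hy.2 hy2n, ?_⟩
  -- compute the distance
  have hz0 : (pt 0 y : E) 0 = 0 := by simp [pt]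
  have hz1 : (pt 0 y : E) 1 = y := by simp [pt]
  have hv0 := (hv (pt 0 y)).1
  have hv1 := (hv (pt 0 y)).2
  rw [hz0, hz1] at hv0
  rw [hz1] at hv1
  have hd : dist (v (pt 0 y)) p = |y - b| := by
    rw [EuclideanSpace.dist_eq, Fin.sum_univ_two]
    rw [hv0, hv1, Real.dist_eq, Real.dist_eq]
    rw [show (0 : ℝ) + (n:ℝ) * Real.cos (2 * π * q * y) - a = 0 by
      rw [← hfy]; simp [hf]]
    simp only [abs_zero]
    rw [show (0:ℝ)^2 + |y - b|^2 = |y - b|^2 by ring, Real.sqrt_sq_eq_abs, abs_abs]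
  rw [hd]
  have h1 : |y - b| ≤ 1 / (2 * q) := by
    rw [abs_le]
    have hlen : y₂ - y₁ = 1 / (2 * q) := by rw [hy₁, hy₂]; field_simp; ring
    constructor <;> nlinarith [hy.1, hy.2]
  have h2 : 1 / (2 * (q:ℝ)) ≤ 1 / q := by
    apply div_le_div_of_nonneg_left (by norm_num) hq0 (by linarith)
  linarith
end
end

section
/- If a homeomorphism f : T² → T² is weak spreading, then f is topologically weak mixing; in particular, for every open set U ⊂ T² and every ε > 0 there exists n > 0 such that fⁿ(U) is ε-dense in T². -/
open Real
noncomputable section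
/-- The 2-torus. -/
abbrev T := AddCircle (1 : ℝ) × AddCircle (1 : ℝ)
/-- The quotient projection from the plane to the torus. -/
def pr (z : E) : T := ((z 0 : AddCircle (1 : ℝ)), (z 1 : AddCircle (1 : ℝ)))
/-- The (weak) spreading condition for a lift: every open set has an iterate which is
`ε`-dense in some ball of radius `N`, for all `ε > 0`, `N > 0`. -/
def Spreading (fh : E → E) : Prop :=
  ∀ U : Set E, IsOpen U → U.Nonempty → ∀ ε > (0 : ℝ), ∀ N > (0 : ℝ), ∃ n > 0, ∃ c : E,
    ∀ p ∈ Metric.ball c N, ∃ a ∈ U, dist (fh^[n] a) p ≤ ε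


lemma pr_continuous : Continuous pr := by
  have h : ∀ i : Fin 2, Continuous fun z : E => ((z i : ℝ) : AddCircle (1:ℝ)) := fun i =>
    (AddCircle.continuous_mk' (1:ℝ)).comp (EuclideanSpace.proj i).continuous
  exact (h 0).prodMk (h 1)

lemma exists_rep (q : AddCircle (1:ℝ)) (a : ℝ) :
    ∃ r : ℝ, r ∈ Set.Ico a (a+1) ∧ (r : AddCircle (1:ℝ)) = q := by
  haveI : Fact ((0:ℝ) < 1) := ⟨zero_lt_one⟩
  exact ⟨(AddCircle.equivIco 1 a q).1, (AddCircle.equivIco 1 a q).2,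
    (AddCircle.equivIco 1 a).symm_apply_apply q⟩

lemma pr_surjective : Function.Surjective pr := by
  intro q
  obtain ⟨r0, _, h0⟩ := exists_rep q.1 0
  obtain ⟨r1, _, h1⟩ := exists_rep q.2 0
  refine ⟨pt r0 r1, ?_⟩
  unfold pr pt
  simp [h0, h1]

lemma dist_pr_le (x y : E) : dist (pr x) (pr y) ≤ dist x y := by
  have h0 : ∀ i, dist (x i) (y i) ≤ dist x y := by
    intro i
    have h1 := (PiLp.lipschitzWith_ofLp 2 (fun _ : Fin 2 => ℝ)).dist_le_mul x y
    have h2 := dist_le_pi_dist (WithLp.equiv 2 (Fin 2 → ℝ) x) (WithLp.equiv 2 (Fin 2 → ℝ) y) i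
    simpa using h2.trans (by simpa using h1)
  have key : ∀ a b : ℝ, dist (a : AddCircle (1:ℝ)) (b : AddCircle (1:ℝ)) ≤ dist a b := by
    intro a b
    rw [dist_eq_norm, dist_eq_norm, ← QuotientAddGroup.mk_sub]
    exact QuotientAddGroup.norm_mk_le_norm
  rw [Prod.dist_eq]
  exact max_le ((key _ _).trans (h0 0)) ((key _ _).trans (h0 1))

lemma prod_map_iterate {α β : Type*} (f : α → α) (g : β → β) (n : ℕ) (x : α × β) :
    (Prod.map f g)^[n] x = (f^[n] x.1, g^[n] x.2) := by
  induction n generalizing x with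
  | zero => simp
  | succ n ih => rw [Function.iterate_succ_apply, ih]; rfl

/-- A weak spreading torus homeomorphism is topologically weak mixing; in particular
every nonempty open set has `ε`-dense iterates in the torus for every `ε > 0`. -/
theorem stmt_15 (f : T ≃ₜ T) (fh : E → E) (hc : Continuous fh)
    (hlift : ∀ z : E, pr (fh z) = f (pr z))
    (hcomm : ∀ (z : E) (v : Fin 2 → ℤ), fh (z + ivec v) = fh z + ivec v)
    (hws : Spreading fh) :
    (∀ U V : Set (T × T), IsOpen U → U.Nonempty → IsOpen V → V.Nonempty →
      ∃ n : ℕ, ((Prod.map f f)^[n] '' U ∩ V).Nonempty) ∧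
    (∀ U : Set T, IsOpen U → U.Nonempty → ∀ ε > (0 : ℝ), ∃ n > 0,
      ∀ p : T, ∃ a ∈ U, dist ((⇑f)^[n] a) p ≤ ε) := by
  have hiter : ∀ (n : ℕ) (z : E), pr (fh^[n] z) = (⇑f)^[n] (pr z) := by
    intro n
    induction n with
    | zero => intro z; simp
    | succ n ih =>
      intro z
      rw [Function.iterate_succ_apply', Function.iterate_succ_apply', hlift, ih]
  -- Lemma A : ε-dense iterates
  have lemA : ∀ U : Set T, IsOpen U → U.Nonempty → ∀ ε > (0 : ℝ), ∃ n > 0,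
      ∀ p : T, ∃ a ∈ U, dist ((⇑f)^[n] a) p ≤ ε := by
    intro U hU hUne ε hε
    have hUopen : IsOpen (pr ⁻¹' U) := hU.preimage pr_continuous
    have hUnone : (pr ⁻¹' U).Nonempty := by
      obtain ⟨u, hu⟩ := hUne
      obtain ⟨z, hz⟩ := pr_surjective u
      exact ⟨z, by simp [Set.mem_preimage, hz, hu]⟩
    obtain ⟨n, hn, c, hball⟩ := hws (pr ⁻¹' U) hUopen hUnone ε hε 1 one_pos
    refine ⟨n, hn, fun p => ?_⟩
    obtain ⟨r0, hr0, he0⟩ := exists_rep p.1 (c 0 - 2⁻¹)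
    obtain ⟨r1, hr1, he1⟩ := exists_rep p.2 (c 1 - 2⁻¹)
    set z : E := pt r0 r1 with hzdef
    have hz0 : z 0 = r0 := rfl
    have hz1 : z 1 = r1 := rfl
    have hprz : pr z = p := by
      unfold pr
      rw [hz0, hz1, he0, he1]
    have hzball : z ∈ Metric.ball c 1 := by
      rw [Metric.mem_ball, EuclideanSpace.dist_eq]
      have e0 : |z 0 - c 0| ≤ 2⁻¹ := by
        rw [hz0, abs_le]
        constructor <;> [linarith [hr0.1]; linarith [hr0.2]]
      have e1 : |z 1 - c 1| ≤ 2⁻¹ := by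
        rw [hz1, abs_le]
        constructor <;> [linarith [hr1.1]; linarith [hr1.2]]
      have : ∑ i : Fin 2, dist (z i) (c i) ^ 2 ≤ 2⁻¹ := by
        rw [Fin.sum_univ_two]
        have b0 : dist (z 0) (c 0) ^ 2 ≤ 4⁻¹ := by
          rw [Real.dist_eq]
          calc |z 0 - c 0| ^ 2 ≤ (2⁻¹:ℝ) ^ 2 := by
                exact pow_le_pow_left₀ (abs_nonneg _) e0 2
            _ = 4⁻¹ := by norm_num
        have b1 : dist (z 1) (c 1) ^ 2 ≤ 4⁻¹ := by
          rw [Real.dist_eq]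
          calc |z 1 - c 1| ^ 2 ≤ (2⁻¹:ℝ) ^ 2 := by
                exact pow_le_pow_left₀ (abs_nonneg _) e1 2
          _ = 4⁻¹ := by norm_num
        linarith
      calc √(∑ i : Fin 2, dist (z i) (c i) ^ 2) ≤ √2⁻¹ := Real.sqrt_le_sqrt this
        _ < 1 := by
          rw [show (1:ℝ) = √1 from (Real.sqrt_one).symm]
          exact Real.sqrt_lt_sqrt (by norm_num) (by norm_num)
    obtain ⟨a, ha, hda⟩ := hball z hzball
    refine ⟨pr a, ha, ?_⟩
    calc dist ((⇑f)^[n] (pr a)) p = dist (pr (fh^[n] a)) (pr z) := by rw [hiter, hprz]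
      _ ≤ dist (fh^[n] a) z := dist_pr_le _ _
      _ ≤ ε := hda
  refine ⟨?_, lemA⟩
  -- hitting lemma
  have hit : ∀ U V : Set T, IsOpen U → U.Nonempty → IsOpen V → V.Nonempty →
      ∃ n > 0, ∃ a ∈ U, (⇑f)^[n] a ∈ V := by
    intro U V hU hUne hV hVne
    obtain ⟨p, hp⟩ := hVne
    obtain ⟨ε, hε, hball⟩ := Metric.isOpen_iff.1 hV p hp
    obtain ⟨n, hn, hd⟩ := lemA U hU hUne (ε/2) (by linarith)
    obtain ⟨a, ha, hda⟩ := hd p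
    exact ⟨n, hn, a, ha, hball (by rw [Metric.mem_ball]; linarith)⟩
  intro U V hU hUne hV hVne
  obtain ⟨⟨u1, u2⟩, hu⟩ := hUne
  obtain ⟨U1, U2, hU1, hU2, hu1, hu2, hUsub⟩ := isOpen_prod_iff.1 hU u1 u2 hu
  obtain ⟨⟨v1, v2⟩, hv⟩ := hVne
  obtain ⟨V1, V2, hV1, hV2, hv1, hv2, hVsub⟩ := isOpen_prod_iff.1 hV v1 v2 hv
  -- connect U1 to U2
  obtain ⟨m, _, b0, hb0, hmb0⟩ := hit U1 U2 hU1 ⟨u1, hu1⟩ hU2 ⟨u2, hu2⟩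
  have hfm : Continuous ((⇑f)^[m]) := f.continuous.iterate m
  set W : Set T := U1 ∩ (⇑f)^[m] ⁻¹' U2 with hWdef
  have hWopen : IsOpen W := hU1.inter (hU2.preimage hfm)
  have hWne : W.Nonempty := ⟨b0, hb0, hmb0⟩
  -- V2' = preimage of V2 under f^[m]
  set V2' : Set T := (⇑f)^[m] ⁻¹' V2 with hV2'def
  have hV2'open : IsOpen V2' := hV2.preimage hfm
  have hV2'ne : V2'.Nonempty := by
    obtain ⟨x, hx⟩ := (f.surjective.iterate m) v2
    exact ⟨x, by simp [hV2'def, Set.mem_preimage, hx, hv2]⟩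
  obtain ⟨p1, hp1⟩ : V1.Nonempty := ⟨v1, hv1⟩
  obtain ⟨p2, hp2⟩ := hV2'ne
  obtain ⟨ε1, hε1, hb1⟩ := Metric.isOpen_iff.1 hV1 p1 hp1
  obtain ⟨ε2, hε2, hb2⟩ := Metric.isOpen_iff.1 hV2'open p2 hp2
  set ε := min ε1 ε2 / 2 with hεdef
  obtain ⟨n, hn, hd⟩ := lemA W hWopen hWne ε (by positivity)
  obtain ⟨a, haW, hda⟩ := hd p1
  obtain ⟨b, hbW, hdb⟩ := hd p2
  have haV1 : (⇑f)^[n] a ∈ V1 := by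
    apply hb1
    rw [Metric.mem_ball]
    have : ε < ε1 := by
      have := min_le_left ε1 ε2
      rw [hεdef]; linarith
    linarith
  have hbV2' : (⇑f)^[n] b ∈ V2' := by
    apply hb2
    rw [Metric.mem_ball]
    have : ε < ε2 := by
      have := min_le_right ε1 ε2
      rw [hεdef]; linarith
    linarith
  refine ⟨n, ((Prod.map f f)^[n] (a, (⇑f)^[m] b)), ⟨⟨(a, (⇑f)^[m] b), ?_, rfl⟩, ?_⟩⟩
  · exact hUsub ⟨haW.1, hbW.2⟩
  · rw [prod_map_iterate]
    apply hVsub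
    refine ⟨haV1, ?_⟩
    show (⇑f)^[n] ((⇑f)^[m] b) ∈ V2
    rw [← Function.iterate_add_apply, Nat.add_comm, Function.iterate_add_apply]
    exact hbV2'
end
end

section
/- Let v̂(x,y) = (x + n·cos(2πqy), y) with n, q positive integers, q ≥ 2n. Suppose γ ⊂ ℝ² is a connected set containing, for every y ∈ [-n, n], a point of the form (s_y, y) with |s_y| ≤ δ/2, where δ/2 < 1/q. Then v̂(γ) is (2/q)-dense in [-n, n] × [-n, n]; in particular, since q ≥ 2n, v̂(γ) is (1/n)-dense in [-n,n] × [-n,n]. -/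
open Real
noncomputable section
set_option maxHeartbeats 1000000 in
/-- If a connected set `γ` contains, for every `y ∈ [-n,n]`, a point `(s_y, y)` with
`|s_y| ≤ δ/2 < 1/q`, then `v̂(γ)` is `(2/q)`-dense in `[-n,n]²`; since `q ≥ 2n` it is
in particular `(1/n)`-dense there. -/
theorem stmt_19 (n q : ℕ) (hn : 0 < n) (hq : 2 * n ≤ q) (δ : ℝ) (hδ : δ / 2 < 1 / (q : ℝ))
    (v : E → E)
    (hv : ∀ z : E, v z 0 = z 0 + (n : ℝ) * Real.cos (2 * π * (q : ℝ) * z 1) ∧ v z 1 = z 1)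
    (γ : Set E) (hγc : IsConnected γ)
    (hγ : ∀ y : ℝ, -(n : ℝ) ≤ y → y ≤ (n : ℝ) → ∃ z ∈ γ, z 1 = y ∧ |z 0| ≤ δ / 2) :
    (∀ p : E, |p 0| ≤ (n : ℝ) → |p 1| ≤ (n : ℝ) →
      ∃ z ∈ γ, dist (v z) p ≤ 2 / (q : ℝ)) ∧
    (∀ p : E, |p 0| ≤ (n : ℝ) → |p 1| ≤ (n : ℝ) →
      ∃ z ∈ γ, dist (v z) p ≤ 1 / (n : ℝ)) := by
  have hn' : (0 : ℝ) < n := by exact_mod_cast hn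
  have hn1 : (1 : ℝ) ≤ n := by exact_mod_cast hn
  have hq0 : 0 < q := lt_of_lt_of_le (by positivity) hq
  have hq' : (0 : ℝ) < q := by exact_mod_cast hq0
  have hq1 : (1 : ℝ) ≤ q := by exact_mod_cast hq0
  have hqn : 2 * (n : ℝ) ≤ q := by exact_mod_cast hq
  have hiq : (0 : ℝ) < 1 / q := by positivity
  have key : ∀ p : E, |p 0| ≤ (n : ℝ) → |p 1| ≤ (n : ℝ) →
      ∃ z ∈ γ, dist (v z) p ≤ 2 / (q : ℝ) := by
    intro p hp0 hp1
    rw [abs_le] at hp0 hp1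
    set a : ℝ := min (p 1) ((n : ℝ) - 1 / q) with ha
    have hinvq : 1 / (q : ℝ) ≤ n := by
      rw [div_le_iff₀ hq']
      nlinarith
    have ha1 : -(n : ℝ) ≤ a := le_min hp1.1 (by linarith)
    have ha2 : a ≤ p 1 := min_le_left _ _
    have ha3 : p 1 ≤ a + 1 / q := by
      rcases le_total (p 1) ((n:ℝ) - 1/q) with h' | h'
      · rw [ha, min_eq_left h']; linarith
      · rw [ha, min_eq_right h']; linarith [hp1.2]
    have ha4 : a + 1 / q ≤ n := by
      have := min_le_right (p 1) ((n:ℝ) - 1/q)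
      linarith
    -- two special points in [a, a+1/q] where cos(2πq y) = 1 and -1
    set k : ℤ := ⌈(q : ℝ) * a⌉ with hk
    set y₁ : ℝ := (k : ℝ) / q with hy₁
    have hky : (q : ℝ) * a ≤ k := Int.le_ceil _
    have hky' : (k : ℝ) ≤ q * a + 1 := by
      have := Int.ceil_lt_add_one ((q : ℝ) * a)
      linarith
    have hmul : (a + 1 / q) * q = q * a + 1 := by field_simp
    have hy1a : a ≤ y₁ := by rw [hy₁, le_div_iff₀ hq']; nlinarith
    have hy1b : y₁ ≤ a + 1 / q := by
      rw [hy₁, div_le_iff₀ hq', hmul]; linarith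
    have hc1 : Real.cos (2 * π * q * y₁) = 1 := by
      have : 2 * π * q * y₁ = (k : ℝ) * (2 * π) := by
        field_simp [hy₁]; rw [hy₁, mul_div_cancel₀ _ hq'.ne']
      rw [this, Real.cos_int_mul_two_pi]
    set m : ℤ := ⌈(q : ℝ) * a - 1 / 2⌉ with hm
    set y₂ : ℝ := ((m : ℝ) + 1 / 2) / q with hy₂
    have hmy : (q : ℝ) * a - 1 / 2 ≤ m := Int.le_ceil _
    have hmy' : (m : ℝ) ≤ q * a + 1 / 2 := by
      have := Int.ceil_lt_add_one ((q : ℝ) * a - 1 / 2)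
      linarith
    have hy2a : a ≤ y₂ := by rw [hy₂, le_div_iff₀ hq']; nlinarith
    have hy2b : y₂ ≤ a + 1 / q := by
      rw [hy₂, div_le_iff₀ hq', hmul]; linarith
    have hc2 : Real.cos (2 * π * q * y₂) = -1 := by
      have : 2 * π * q * y₂ = (m : ℝ) * (2 * π) + π := by
        field_simp [hy₂]; rw [hy₂, mul_assoc, mul_div_cancel₀ _ hq'.ne']; ring
      rw [this, Real.cos_int_mul_two_pi_add_pi]
    -- IVT
    set f : ℝ → ℝ := fun y => (n : ℝ) * Real.cos (2 * π * q * y) with hf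
    have hfc : ContinuousOn f (Set.uIcc y₁ y₂) := by
      apply Continuous.continuousOn
      fun_prop
    have hmem : p 0 ∈ Set.uIcc (f y₁) (f y₂) := by
      have hfy1 : f y₁ = n := by rw [hf]; simp [hc1]
      have hfy2 : f y₂ = -n := by rw [hf]; simp [hc2]
      rw [hfy1, hfy2, Set.uIcc_of_ge (by linarith)]
      exact ⟨hp0.1, hp0.2⟩
    obtain ⟨y, hy, hfy⟩ := intermediate_value_uIcc hfc hmem
    have hybounds : a ≤ y ∧ y ≤ a + 1 / q := by
      rcases Set.mem_uIcc.mp hy with ⟨h1, h2⟩ | ⟨h1, h2⟩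
      · exact ⟨le_trans hy1a h1, le_trans h2 hy2b⟩
      · exact ⟨le_trans hy2a h1, le_trans h2 hy1b⟩
    obtain ⟨z, hzγ, hz1, hz0⟩ := hγ y (by linarith [hybounds.1]) (by linarith [hybounds.2])
    refine ⟨z, hzγ, ?_⟩
    have hv0 := (hv z).1
    have hv1 := (hv z).2
    have hd0 : |v z 0 - p 0| ≤ 1 / q := by
      rw [hv0, hz1]
      have : z 0 + (n : ℝ) * Real.cos (2 * π * q * y) - p 0 = z 0 := by
        rw [show (n : ℝ) * Real.cos (2 * π * q * y) = f y from rfl, hfy]; ring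
      rw [this]
      linarith [hz0, hδ]
    have hd1 : |v z 1 - p 1| ≤ 1 / q := by
      rw [hv1, hz1, abs_le]
      constructor <;> [linarith [hybounds.1, ha2]; linarith [hybounds.2, ha3]]
    have e0 : dist (v z 0) (p 0) ≤ 1 / q := by rw [Real.dist_eq]; exact hd0
    have e1 : dist (v z 1) (p 1) ≤ 1 / q := by rw [Real.dist_eq]; exact hd1
    have hnn0 : (0:ℝ) ≤ dist (v z 0) (p 0) := dist_nonneg
    have hnn1 : (0:ℝ) ≤ dist (v z 1) (p 1) := dist_nonneg
    rw [EuclideanSpace.dist_eq, Fin.sum_univ_two]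
    have hb : dist (v z 0) (p 0) ^ 2 + dist (v z 1) (p 1) ^ 2 ≤ (2 / q) ^ 2 := by
      have b0 : dist (v z 0) (p 0) ^ 2 ≤ (1 / (q:ℝ)) ^ 2 := pow_le_pow_left₀ hnn0 e0 2
      have b1 : dist (v z 1) (p 1) ^ 2 ≤ (1 / (q:ℝ)) ^ 2 := pow_le_pow_left₀ hnn1 e1 2
      have h4 : (2 / (q:ℝ)) ^ 2 = 4 * (1 / q) ^ 2 := by ring
      nlinarith [sq_nonneg (1 / (q:ℝ))]
    calc Real.sqrt (dist (v z 0) (p 0) ^ 2 + dist (v z 1) (p 1) ^ 2)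
        ≤ Real.sqrt ((2 / q) ^ 2) := Real.sqrt_le_sqrt hb
      _ = 2 / q := Real.sqrt_sq (by positivity)
  refine ⟨key, fun p h0 h1 => ?_⟩
  obtain ⟨z, hz, hd⟩ := key p h0 h1
  refine ⟨z, hz, le_trans hd ?_⟩
  rw [div_le_div_iff₀ hq' hn']
  linarith
end
end
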